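/- Let F be a field of characteristic 2, φ a nondefective quadratic form over F with 1 ∈ D_F^*(φ), and f ∈ F[X] a monic irreducible polynomial in one variable. Then the following are equivalent: (i) f ∈ D_{F(X)}^*(φ)^m for some m ≤ deg f; (ii) φ_{F(f)} is isotropic. -/

import Mathlib

/-!
Background definitions for quadratic forms over fields of characteristic 2,
following the conventions of "Isotropy of quadratic forms over function fields
in characteristic 2".  A quadratic form of dimension `n` over a commutative ring
`R` is represented by a coefficient matrix `c : ι → ι → R` (`ι` a finite index
type), the associated quadratic map being `x ↦ ∑ i j, c i j * x i * x j`; every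
quadratic form on a finite-dimensional vector space (a map satisfying
`φ(av) = a²φ(v)` whose polar form is bilinear) arises this way.
-/

open scoped BigOperators Pointwise Classical

namespace QF2

variable {R S : Type*} [CommRing R] [CommRing S] {ι κ : Type} [Fintype ι] [Fintype κ]

/-- The value at `x` of the quadratic form with coefficient matrix `c`, namely
`∑ i j, c i j * x i * x j`. -/
def eval (c : ι → ι → R) (x : ι → R) : R := ∑ i, ∑ j, c i j * x i * x j

/-- The polar form `b(x,y) = q(x+y) - q(x) - q(y)` of the quadratic form `c`. -/
def polar (c : ι → ι → R) (x y : ι → R) : R := ∑ i, ∑ j, c i j * (x i * y j + x j * y i)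

/-- A quadratic form is isotropic if it vanishes on a nonzero vector. -/
def IsIsotropic (c : ι → ι → R) : Prop := ∃ x : ι → R, x ≠ 0 ∧ eval c x = 0

/-- Anisotropic: not isotropic. -/
abbrev IsAnisotropic (c : ι → ι → R) : Prop := ¬ IsIsotropic c

/-- Base change of a quadratic form along a ring homomorphism. -/
def map (σ : R →+* S) (c : ι → ι → R) : ι → ι → S := fun i j => σ (c i j)

/-- Quasilinear (totally singular): the polar form vanishes identically. -/
def IsQuasilinear (c : ι → ι → R) : Prop := ∀ x y : ι → R, polar c x y = 0

/-- Nondefective (quasilinear index `i_d = 0`): no nonzero vector of the radical of the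
polar form is isotropic. -/
def IsNondefective (c : ι → ι → R) : Prop :=
  ∀ x : ι → R, (∀ y, polar c x y = 0) → eval c x = 0 → x = 0

/-- `d` is isometric to `c`. -/
def Isometric (c : ι → ι → R) (d : κ → κ → R) : Prop :=
  ∃ g : (κ → R) ≃ₗ[R] (ι → R), ∀ x, eval d x = eval c (g x)

/-- `D_R^*(c)`: the set of nonzero represented elements. -/
def reps (c : ι → ι → R) : Set R := {a | a ≠ 0 ∧ ∃ x : ι → R, eval c x = a}

/-- `D_R^*(c)^m`: products of `m` nonzero represented elements. -/
def repsPow (c : ι → ι → R) (m : ℕ) : Set R :=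
  {a | ∃ v : Fin m → R, (∀ k, v k ∈ reps c) ∧ a = ∏ k, v k}

/-- The multiplicative subgroup of `F^*` generated by a set `s` of nonzero elements,
realized as a subset of `F` (products of elements of `s` and their inverses). -/
def genBy {F : Type*} [Field F] (s : Set F) : Set F :=
  ↑(Submonoid.closure (s ∪ Inv.inv '' s))

/-- `⟨D_F^*(c)⟩`: the subgroup generated by the nonzero represented elements. -/
def genGroup {F : Type*} [Field F] (c : ι → ι → F) : Set F := genBy (reps c)

/-- `⟨D_F^*(c)²⟩`. -/
def genGroup2 {F : Type*} [Field F] (c : ι → ι → F) : Set F := genBy (repsPow c 2)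

/-- The scaled quadratic form `a·c`. -/
def smulQF (a : R) (c : ι → ι → R) : ι → ι → R := fun i j => a * c i j

/-- Orthogonal sum of two quadratic forms. -/
def orthSum (c : ι → ι → R) (d : κ → κ → R) : (ι ⊕ κ) → (ι ⊕ κ) → R
  | Sum.inl i, Sum.inl j => c i j
  | Sum.inr i, Sum.inr j => d i j
  | _, _ => 0

lemma eval_add (c : ι → ι → R) (x y : ι → R) :
    eval c (x + y) = eval c x + eval c y + polar c x y := by
  unfold eval polar
  rw [← Finset.sum_add_distrib, ← Finset.sum_add_distrib]
  refine Finset.sum_congr rfl fun i _ => ?_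
  rw [← Finset.sum_add_distrib, ← Finset.sum_add_distrib]
  refine Finset.sum_congr rfl fun j _ => ?_
  simp only [Pi.add_apply]; ring

lemma polar_add_left (c : ι → ι → R) (x x' y : ι → R) :
    polar c (x + x') y = polar c x y + polar c x' y := by
  unfold polar
  rw [← Finset.sum_add_distrib]
  refine Finset.sum_congr rfl fun i _ => ?_
  rw [← Finset.sum_add_distrib]
  refine Finset.sum_congr rfl fun j _ => ?_
  simp only [Pi.add_apply]; ring

lemma polar_smul_left (c : ι → ι → R) (a : R) (x y : ι → R) :
    polar c (a • x) y = a * polar c x y := by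
  unfold polar
  rw [Finset.mul_sum]
  refine Finset.sum_congr rfl fun i _ => ?_
  rw [Finset.mul_sum]
  refine Finset.sum_congr rfl fun j _ => ?_
  simp only [Pi.smul_apply, smul_eq_mul]; ring

lemma eval_smul (c : ι → ι → R) (a : R) (x : ι → R) :
    eval c (a • x) = a ^ 2 * eval c x := by
  unfold eval
  rw [Finset.mul_sum]
  refine Finset.sum_congr rfl fun i _ => ?_
  rw [Finset.mul_sum]
  refine Finset.sum_congr rfl fun j _ => ?_
  simp only [Pi.smul_apply, smul_eq_mul]; ring

/-- The defect of a quadratic form: the submodule of isotropic vectors lying in the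
radical of the polar form. -/
def defectSubmodule (c : ι → ι → R) : Submodule R (ι → R) where
  carrier := {x | (∀ y, polar c x y = 0) ∧ eval c x = 0}
  zero_mem' := by
    constructor
    · intro y; unfold polar; simp
    · unfold eval; simp
  add_mem' := by
    rintro x x' ⟨hx1, hx2⟩ ⟨hx1', hx2'⟩
    refine ⟨fun y => ?_, ?_⟩
    · rw [polar_add_left, hx1 y, hx1' y, add_zero]
    · rw [eval_add, hx2, hx2', hx1 x', add_zero, add_zero]
  smul_mem' := by
    rintro a x ⟨hx1, hx2⟩
    refine ⟨fun y => ?_, ?_⟩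
    · rw [polar_smul_left, hx1 y, mul_zero]
    · rw [eval_smul, hx2, mul_zero]

/-- The quasilinear index (defect) `i_d` of a quadratic form. -/
noncomputable def defectIndex (c : ι → ι → R) : ℕ :=
  Module.finrank R (defectSubmodule c)

/-- The total isotropy index `i_t`: the dimension of a maximal totally isotropic
subspace. -/
noncomputable def totalIndex (c : ι → ι → R) : ℕ :=
  sSup {m | ∃ W : Submodule R (ι → R), (∀ x ∈ W, eval c x = 0) ∧ Module.finrank R W = m}

/-- The Witt index `i_W = i_t - i_d`. -/
noncomputable def wittIndex (c : ι → ι → R) : ℕ := totalIndex c - defectIndex c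

variable {F : Type u} [Field F]

/-- The homogeneous quadratic polynomial `φ(X_1, …, X_n)` attached to a quadratic form. -/
noncomputable def poly (c : ι → ι → F) : MvPolynomial ι F :=
  ∑ i, ∑ j, MvPolynomial.C (c i j) * (MvPolynomial.X i * MvPolynomial.X j)

/-- The canonical map from `F` to the total fraction ring of `A/(f)`; when `f` is
irreducible, the target is the function field `F(f)`. -/
noncomputable def ffHom {A : Type*} [CommRing A] (σ : F →+* A) (f : A) :
    F →+* FractionRing (A ⧸ Ideal.span {f}) :=
  (algebraMap (A ⧸ Ideal.span {f}) (FractionRing (A ⧸ Ideal.span {f}))).comp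
    ((Ideal.Quotient.mk (Ideal.span {f})).comp σ)

/-- The canonical map from `R` into (the total fraction ring of) `R[X_i : i ∈ κ]`;
for a field this is the inclusion into the rational function field `F(X_i : i ∈ κ)`. -/
noncomputable def ratHom (κ : Type) (R : Type*) [CommRing R] :
    R →+* FractionRing (MvPolynomial κ R) :=
  (algebraMap (MvPolynomial κ R) (FractionRing (MvPolynomial κ R))).comp MvPolynomial.C

/-- The canonical map from `F` into the rational function field `F(X)`. -/
noncomputable def ratHom1 (F : Type u) [Field F] : F →+* FractionRing (Polynomial F) :=
  (algebraMap (Polynomial F) (FractionRing (Polynomial F))).comp Polynomial.C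

/-- `φ_{F(ψ)}` is isotropic, where `F(ψ)` is the function field of the quadratic form `ψ`.
When the polynomial of `ψ` is irreducible this is the quotient field of `F[X]/(ψ(X))`;
otherwise (`ψ ≅ ⟨a⟩`, `ψ ≅ ℍ`, or degenerate defective cases) `F(ψ)` is a purely
transcendental extension of `F`, over which isotropy is equivalent to isotropy over `F`. -/
def IsotropicOverFunField (c : ι → ι → F) (d : κ → κ → F) : Prop :=
  (Irreducible (poly d) → IsIsotropic (map (ffHom MvPolynomial.C (poly d)) c)) ∧
  (¬ Irreducible (poly d) → IsIsotropic c)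

/-- Stable birational equivalence of (nondefective) quadratic forms:
`φ_{F(ψ)}` and `ψ_{F(φ)}` are both isotropic. -/
def StbEquiv (c : ι → ι → F) (d : κ → κ → F) : Prop :=
  IsotropicOverFunField c d ∧ IsotropicOverFunField d c

/-- The leading coefficient of a multivariate polynomial with respect to the
lexicographic ordering on monomials. -/
noncomputable def lexLC {l : ℕ} {F : Type*} [CommSemiring F] (f : MvPolynomial (Fin l) F) : F :=
  if h : f = 0 then 0
  else f.coeff (ofLex ((f.support.image (toLex : (Fin l →₀ ℕ) → Lex (Fin l →₀ ℕ))).max'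
    (Finset.Nonempty.image (MvPolynomial.support_nonempty.mpr h) _)))

/-- The coefficient matrix of the tensor product `π ⊗ φ` of the bilinear Pfister form
`π = ⟨⟨a 1, …, a n⟩⟩_b` with the quadratic form `c` (with respect to the standard basis,
`π ⊗ φ ≅ ⊥_{S ⊆ {1,…,n}} (∏_{i ∈ S} a i) φ`). -/
def pfisterMul {n : ℕ} (a : Fin n → R) (c : ι → ι → R) :
    ((Fin n → Bool) × ι) → ((Fin n → Bool) × ι) → R :=
  fun p q =>
    if p.1 = q.1 then (∏ i, if p.1 i then a i else 1) * c p.2 q.2 else 0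

section Aux
set_option linter.unusedSectionVars false

open Polynomial

variable {R S T : Type*} [CommRing R] [CommRing S] [CommRing T] {ι : Type} [Fintype ι]

lemma eval_map_apply (σ : R →+* S) (c : ι → ι → R) (x : ι → R) :
    eval (map σ c) (fun i => σ (x i)) = σ (eval c x) := by
  simp [eval, map, map_sum, map_mul, mul_assoc]

lemma polar_map_apply (σ : R →+* S) (c : ι → ι → R) (x y : ι → R) :
    polar (map σ c) (fun i => σ (x i)) (fun i => σ (y i)) = σ (polar c x y) := by
  simp [polar, map, map_sum, map_mul, map_add]

lemma map_map_eq (σ : R →+* S) (τ : S →+* T) (c : ι → ι → R) :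
    map τ (map σ c) = map (τ.comp σ) c := rfl

lemma dvd_eval_sub (c : ι → ι → R) (g : R) (y z : ι → R) (h : ∀ i, g ∣ y i - z i) :
    g ∣ eval c y - eval c z := by
  unfold eval
  rw [← Finset.sum_sub_distrib]
  refine Finset.dvd_sum fun i _ => ?_
  rw [← Finset.sum_sub_distrib]
  refine Finset.dvd_sum fun j _ => ?_
  obtain ⟨a, ha⟩ := h i
  obtain ⟨b, hb⟩ := h j
  have e1 : y i = g * a + z i := sub_eq_iff_eq_add.mp ha
  have e2 : y j = g * b + z j := sub_eq_iff_eq_add.mp hb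
  refine ⟨a * (c i j * (g * b + z j)) + b * (c i j * z i), ?_⟩
  rw [e1, e2]; ring

end Aux
section Aux2

set_option linter.unusedSectionVars false

open Polynomial

variable {K : Type*} [Field K] {ι : Type} [Fintype ι]

lemma sq_mul_mem_reps {c : ι → ι → K} {a : K} (ha : a ∈ reps c) {s : K} (hs : s ≠ 0) :
    s ^ 2 * a ∈ reps c := by
  obtain ⟨ha0, x, hx⟩ := ha
  exact ⟨mul_ne_zero (pow_ne_zero 2 hs) ha0, s • x, by rw [eval_smul, hx]⟩

lemma one_mem_repsPow_zero (c : ι → ι → K) : (1 : K) ∈ repsPow c 0 :=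
  ⟨fun k => k.elim0, fun k => k.elim0, by simp⟩

lemma mem_repsPow_one {c : ι → ι → K} {a : K} (ha : a ∈ reps c) : a ∈ repsPow c 1 :=
  ⟨fun _ => a, fun _ => ha, by simp⟩

lemma repsPow_mul_mem {c : ι → ι → K} {a b : K} {m m' : ℕ}
    (ha : a ∈ repsPow c m) (hb : b ∈ repsPow c m') : a * b ∈ repsPow c (m + m') := by
  obtain ⟨v, hv, rfl⟩ := ha
  obtain ⟨w, hw, rfl⟩ := hb
  refine ⟨Fin.append v w, fun k => ?_, ?_⟩
  · refine Fin.addCases (fun i => ?_) (fun i => ?_) k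
    · rw [Fin.append_left]; exact hv i
    · rw [Fin.append_right]; exact hw i
  · rw [Fin.prod_univ_add]
    congr 1
    · exact Finset.prod_congr rfl fun i _ => (Fin.append_left v w i).symm
    · exact Finset.prod_congr rfl fun i _ => (Fin.append_right v w i).symm

end Aux2
section Aux3

set_option linter.unusedSectionVars false
set_option maxHeartbeats 1000000

open Polynomial

variable {F : Type u} [Field F] {ι : Type} [Fintype ι]

/-- An isotropic nondefective form represents every nonzero element of any field extension. -/
lemma mem_reps_of_isotropic {c : ι → ι → F} (hnd : IsNondefective c)
    (hiso : IsIsotropic c) {K : Type*} [Field K] (σ : F →+* K) {a : K} (ha : a ≠ 0) :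
    a ∈ reps (map σ c) := by
  obtain ⟨x, hx0, hx⟩ := hiso
  have hw : ∃ w, polar c x w ≠ 0 := by
    by_contra hcon
    push_neg at hcon
    exact hx0 (hnd x hcon hx)
  obtain ⟨w, hw⟩ := hw
  have hb : σ (polar c x w) ≠ 0 := fun h => hw (by
    have := σ.injective (a₁ := polar c x w) (a₂ := 0) (by simpa using h)
    exact this)
  set xσ : ι → K := fun i => σ (x i) with hxσ
  set wσ : ι → K := fun i => σ (w i) with hwσ
  set t : K := (a - eval (map σ c) wσ) / σ (polar c x w) with ht
  refine ⟨ha, t • xσ + wσ, ?_⟩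
  rw [eval_add, eval_smul, polar_smul_left]
  have e1 : eval (map σ c) xσ = 0 := by rw [hxσ, eval_map_apply, hx, map_zero]
  have e2 : polar (map σ c) xσ wσ = σ (polar c x w) := by rw [hxσ, hwσ, polar_map_apply]
  rw [e1, e2]
  have h1 : t * σ (polar c x w) = a - eval (map σ c) wσ := div_mul_cancel₀ _ hb
  rw [h1]; ring

/-- Leading coefficient lemma for values of an anisotropic form at polynomial vectors. -/
lemma lc_lemma {c : ι → ι → F} (han : ¬ IsIsotropic c) {y : ι → Polynomial F} (hy : y ≠ 0) :
    eval (map (Polynomial.C : F →+* Polynomial F) c) y ≠ 0 ∧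
    (eval (map (Polynomial.C : F →+* Polynomial F) c) y).natDegree
      = 2 * (Finset.univ.sup fun i => (y i).natDegree) ∧
    (eval (map (Polynomial.C : F →+* Polynomial F) c) y).leadingCoeff ∈ reps c := by
  classical
  set D : ℕ := Finset.univ.sup fun i => (y i).natDegree with hD
  have hDle : ∀ i, (y i).natDegree ≤ D := fun i =>
    Finset.le_sup (f := fun i => (y i).natDegree) (Finset.mem_univ i)
  set yh : ι → F := fun i => (y i).coeff D with hyh
  obtain ⟨j0, hj0⟩ := Function.ne_iff.mp hy
  have hj0' : y j0 ≠ 0 := by simpa using hj0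
  haveI : Nonempty ι := ⟨j0⟩
  have hex : ∃ j, y j ≠ 0 ∧ (y j).natDegree = D := by
    by_cases hD0 : D = 0
    · refine ⟨j0, hj0', ?_⟩
      have := hDle j0; omega
    · obtain ⟨j, -, hj⟩ := Finset.exists_mem_eq_sup Finset.univ Finset.univ_nonempty
        (fun i => (y i).natDegree)
      refine ⟨j, ?_, hj.symm⟩
      intro h0
      rw [h0, natDegree_zero] at hj
      exact hD0 (hD.trans hj)
  obtain ⟨j, hj1, hj2⟩ := hex
  have hyhj : yh j = (y j).leadingCoeff := by
    show (y j).coeff D = _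
    rw [← hj2, Polynomial.coeff_natDegree]
  have hyh0 : yh ≠ 0 := by
    intro h
    have := congrFun h j
    rw [hyhj] at this
    exact leadingCoeff_ne_zero.mpr hj1 (by simpa using this)
  -- coefficient computations
  have coeff_mul_high : ∀ p q : Polynomial F, p.natDegree ≤ D → q.natDegree ≤ D →
      ∀ k, 2 * D < k → (p * q).coeff k = 0 := by
    intro p q hp hq k hk
    rw [coeff_mul]
    refine Finset.sum_eq_zero fun b hb => ?_
    rw [Finset.HasAntidiagonal.mem_antidiagonal] at hb
    rcases le_or_gt b.1 D with h1 | h1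
    · have h2 : D < b.2 := by omega
      rw [coeff_eq_zero_of_natDegree_lt (lt_of_le_of_lt hq h2), mul_zero]
    · rw [coeff_eq_zero_of_natDegree_lt (lt_of_le_of_lt hp h1), zero_mul]
  have coeff_mul_top : ∀ p q : Polynomial F, p.natDegree ≤ D → q.natDegree ≤ D →
      (p * q).coeff (2 * D) = p.coeff D * q.coeff D := by
    intro p q hp hq
    rw [coeff_mul]
    rw [Finset.sum_eq_single ((D, D) : ℕ × ℕ)]
    · intro b hb hne
      rw [Finset.HasAntidiagonal.mem_antidiagonal] at hb
      rcases lt_trichotomy b.1 D with h1 | h1 | h1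
      · have h2 : D < b.2 := by omega
        rw [coeff_eq_zero_of_natDegree_lt (lt_of_le_of_lt hq h2), mul_zero]
      · exact absurd (Prod.ext h1 (by omega)) hne
      · rw [coeff_eq_zero_of_natDegree_lt (lt_of_le_of_lt hp h1), zero_mul]
    · intro hmem
      exact absurd (Finset.HasAntidiagonal.mem_antidiagonal.mpr (by omega)) hmem
  have hE : eval (map (Polynomial.C : F →+* Polynomial F) c) y
      = ∑ i, ∑ j, Polynomial.C (c i j) * (y i * y j) := by
    simp [eval, map, mul_assoc]
  have hcoeffE : ∀ k, 2 * D < k →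
      (eval (map (Polynomial.C : F →+* Polynomial F) c) y).coeff k = 0 := by
    intro k hk
    rw [hE]
    simp only [finset_sum_coeff, coeff_C_mul]
    refine Finset.sum_eq_zero fun i _ => Finset.sum_eq_zero fun j _ => ?_
    rw [coeff_mul_high _ _ (hDle i) (hDle j) k hk, mul_zero]
  have hcoeff2D : (eval (map (Polynomial.C : F →+* Polynomial F) c) y).coeff (2 * D)
      = eval c yh := by
    rw [hE]
    simp only [finset_sum_coeff, coeff_C_mul]
    rw [eval]
    refine Finset.sum_congr rfl fun i _ => Finset.sum_congr rfl fun j _ => ?_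
    rw [coeff_mul_top _ _ (hDle i) (hDle j)]
    ring
  have hev : eval c yh ≠ 0 := fun h => han ⟨yh, hyh0, h⟩
  have hE0 : eval (map (Polynomial.C : F →+* Polynomial F) c) y ≠ 0 := by
    intro h
    rw [h, Polynomial.coeff_zero] at hcoeff2D
    exact hev hcoeff2D.symm
  have hdeg : (eval (map (Polynomial.C : F →+* Polynomial F) c) y).natDegree = 2 * D := by
    refine le_antisymm ?_ ?_
    · exact natDegree_le_iff_coeff_eq_zero.mpr hcoeffE
    · exact le_natDegree_of_ne_zero (by rw [hcoeff2D]; exact hev)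
  refine ⟨hE0, hdeg, ?_⟩
  have hlc : (eval (map (Polynomial.C : F →+* Polynomial F) c) y).leadingCoeff = eval c yh := by
    rw [Polynomial.leadingCoeff, hdeg, hcoeff2D]
  rw [hlc]
  exact ⟨hev, yh, rfl⟩

end Aux3
section Aux4

set_option linter.unusedSectionVars false
set_option maxHeartbeats 1000000

open Polynomial

variable {F : Type u} [Field F] {ι : Type} [Fintype ι]

lemma eval_zero_vec (c : ι → ι → Polynomial F) : eval c (0 : ι → Polynomial F) = 0 := by
  simp [eval]

lemma repsPow_of_multiset {c : ι → ι → F} (S : Multiset (Polynomial F))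
    (hS : ∀ q ∈ S, ∃ m ≤ q.natDegree,
      algebraMap (Polynomial F) (FractionRing (Polynomial F)) q
        ∈ repsPow (map (ratHom1 F) c) m) :
    ∃ m ≤ (S.map Polynomial.natDegree).sum,
      algebraMap (Polynomial F) (FractionRing (Polynomial F)) S.prod
        ∈ repsPow (map (ratHom1 F) c) m := by
  induction S using Multiset.induction with
  | empty =>
    refine ⟨0, by simp, ?_⟩
    simpa using one_mem_repsPow_zero (map (ratHom1 F) c)
  | cons q S ih =>
    obtain ⟨mq, hq1, hq2⟩ := hS q (Multiset.mem_cons_self q S)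
    obtain ⟨mS, h1, h2⟩ := ih fun r hr => hS r (Multiset.mem_cons_of_mem hr)
    refine ⟨mq + mS, ?_, ?_⟩
    · rw [Multiset.map_cons, Multiset.sum_cons]
      exact Nat.add_le_add hq1 h1
    · rw [Multiset.prod_cons, map_mul]
      exact repsPow_mul_mem hq2 h2

lemma claim2 {c : ι → ι → F} (han : ¬ IsIsotropic c) {f : Polynomial F} (hfm : f.Monic)
    (hfi : Irreducible f) :
    ∀ N : ℕ, ∀ (h : Polynomial F) (y : ι → Polynomial F),
      h ≠ 0 → y ≠ 0 → eval (map (Polynomial.C : F →+* Polynomial F) c) y = f * h →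
      ¬ f ∣ h → h.natDegree ≤ N →
      (∀ q : Polynomial F, q.Monic → Irreducible q → q ∣ h →
        (∃ z : ι → Polynomial F, (¬ ∀ i, q ∣ z i) ∧
          q ∣ eval (map (Polynomial.C : F →+* Polynomial F) c) z) →
        ∃ m ≤ q.natDegree,
          algebraMap (Polynomial F) (FractionRing (Polynomial F)) q
            ∈ repsPow (map (ratHom1 F) c) m) →
      ∃ m ≤ h.natDegree + 2,
        algebraMap (Polynomial F) (FractionRing (Polynomial F)) f
          ∈ repsPow (map (ratHom1 F) c) m := by
  classical
  intro N
  induction N using Nat.strong_induction_on with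
  | _ N ihN =>
    intro h y hh0 hy0 heval hfh hhN hIH
    by_cases hbad : ∃ q : Polynomial F, q.Monic ∧ Irreducible q ∧ q ∣ h ∧ ∀ i, q ∣ y i
    · -- descent: divide y by q and h by q^2
      obtain ⟨q, hqm, hqi, hqh, hqy⟩ := hbad
      choose y₁ hy₁ using hqy
      have hq0 : q ≠ 0 := hqm.ne_zero
      have hyeq : y = q • y₁ := funext fun i => by
        rw [hy₁ i]; simp
      have heval₁ : q ^ 2 * eval (map (Polynomial.C : F →+* Polynomial F) c) y₁ = f * h := by
        rw [← heval, hyeq, eval_smul]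
      have hqf : ¬ q ∣ f := by
        intro hdvd
        have hassoc : Associated q f := hqi.associated_of_dvd hfi hdvd
        have hq_eq : q = f := Polynomial.eq_of_monic_of_associated hqm hfm hassoc
        exact hfh (hq_eq ▸ hqh)
      obtain ⟨h', hh'⟩ := hqh
      have hstep : q * eval (map (Polynomial.C : F →+* Polynomial F) c) y₁ = f * h' := by
        refine mul_left_cancel₀ hq0 ?_
        have h2 := heval₁
        rw [hh'] at h2
        linear_combination h2
      have hqh' : q ∣ h' := by
        have hdvd : q ∣ f * h' := ⟨eval (map (Polynomial.C : F →+* Polynomial F) c) y₁, hstep.symm⟩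
        exact (hqi.prime.2.2 f h' hdvd).resolve_left hqf
      obtain ⟨h₁, hh₁⟩ := hqh'
      have hE₁ : eval (map (Polynomial.C : F →+* Polynomial F) c) y₁ = f * h₁ := by
        refine mul_left_cancel₀ hq0 ?_
        rw [hstep, hh₁]; ring
      have hheq : h = q ^ 2 * h₁ := by rw [hh', hh₁]; ring
      have hh₁0 : h₁ ≠ 0 := fun h0 => hh0 (by rw [hheq, h0, mul_zero])
      have hy₁0 : y₁ ≠ 0 := by
        intro h0
        rw [h0, eval_zero_vec] at hE₁
        exact hh₁0 (by
          have := hE₁.symm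
          exact (mul_eq_zero.mp this).resolve_left hfi.ne_zero)
      have hfh₁ : ¬ f ∣ h₁ := fun hd => hfh (hd.trans ⟨q ^ 2, by rw [hheq]; ring⟩)
      have hlt : h₁.natDegree < h.natDegree := by
        rw [hheq, natDegree_mul (pow_ne_zero 2 hq0) hh₁0, natDegree_pow]
        have := hqi.natDegree_pos
        omega
      obtain ⟨m, hm, hmem⟩ := ihN h₁.natDegree (lt_of_lt_of_le hlt hhN) h₁ y₁ hh₁0 hy₁0 hE₁
        hfh₁ le_rfl
        (fun q' hq'm hq'i hq'd hex => hIH q' hq'm hq'i (hq'd.trans ⟨q ^ 2, by rw [hheq]; ring⟩) hex)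
      exact ⟨m, by omega, hmem⟩
    · -- terminal case
      have hgood : ∀ q : Polynomial F, q.Monic → Irreducible q → q ∣ h → ¬ ∀ i, q ∣ y i := by
        intro q h1 h2 h3 hc
        exact hbad ⟨q, h1, h2, h3, hc⟩
      set S := UniqueFactorizationMonoid.normalizedFactors h with hSdef
      have hSmem : ∀ q ∈ S, q.Monic ∧ Irreducible q ∧ q ∣ h := by
        intro q hq
        have hirr := UniqueFactorizationMonoid.irreducible_of_normalized_factor q hq
        have hnorm := UniqueFactorizationMonoid.normalize_normalized_factor q hq
        have hmon : q.Monic := by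
          have := Polynomial.monic_normalize (p := q) hirr.ne_zero
          rwa [hnorm] at this
        exact ⟨hmon, hirr, UniqueFactorizationMonoid.dvd_of_mem_normalizedFactors hq⟩
      have hrep : ∀ q ∈ S, ∃ m ≤ q.natDegree,
          algebraMap (Polynomial F) (FractionRing (Polynomial F)) q
            ∈ repsPow (map (ratHom1 F) c) m := by
        intro q hq
        obtain ⟨hmon, hirr, hdvd⟩ := hSmem q hq
        refine hIH q hmon hirr hdvd ⟨y, hgood q hmon hirr hdvd, ?_⟩
        rw [heval]
        exact Dvd.dvd.mul_left hdvd f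
      obtain ⟨mS, hmS, hPmem⟩ := repsPow_of_multiset S hrep
      have hP : Associated S.prod h := UniqueFactorizationMonoid.prod_normalizedFactors hh0
      obtain ⟨u, hu⟩ := hP
      obtain ⟨b, hbu, hCb⟩ := Polynomial.isUnit_iff.mp u.isUnit
      have hb0 : b ≠ 0 := hbu.ne_zero
      have hhPb : h = S.prod * Polynomial.C b := by rw [← hu, hCb]
      have hPmonic : S.prod.Monic := by
        have := monic_multiset_prod_of_monic S id (fun q hq => (hSmem q hq).1)
        simpa using this
      have hP0 : S.prod ≠ 0 := hPmonic.ne_zero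
      have hlcb : h.leadingCoeff = b := by
        rw [hhPb, leadingCoeff_mul, hPmonic.leadingCoeff, one_mul, leadingCoeff_C]
      obtain ⟨hE0, hdegE, hlcreps⟩ := lc_lemma han hy0
      have hlcE : (eval (map (Polynomial.C : F →+* Polynomial F) c) y).leadingCoeff = b := by
        rw [heval, leadingCoeff_mul, hfm.leadingCoeff, one_mul, hlcb]
      rw [hlcE] at hlcreps
      -- degree bookkeeping
      have h0S : (0 : Polynomial F) ∉ S := fun h0 => not_irreducible_zero (hSmem 0 h0).2.1
      have hdegP : S.prod.natDegree = (S.map Polynomial.natDegree).sum :=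
        Polynomial.natDegree_multiset_prod S h0S
      have hdegh : h.natDegree = S.prod.natDegree := by
        rw [hhPb, natDegree_mul hP0 (by simpa using hb0), natDegree_C, add_zero]
      have hmS' : mS ≤ h.natDegree := by rw [hdegh, hdegP]; exact hmS
      -- pass to the fraction field
      set K := FractionRing (Polynomial F)
      set τ := algebraMap (Polynomial F) K with hτ
      have hτinj : Function.Injective τ := IsFractionRing.injective _ _
      have hEK : τ (eval (map (Polynomial.C : F →+* Polynomial F) c) y)
          = τ f * (τ S.prod * τ (Polynomial.C b)) := by
        rw [heval, hhPb, map_mul, map_mul]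
      have hPK0 : τ S.prod ≠ 0 := fun h0 => hP0 (hτinj (by rw [h0, map_zero]))
      have hCbK0 : τ (Polynomial.C b) ≠ 0 := fun h0 => (by simpa using hb0 : Polynomial.C b ≠ 0)
        (hτinj (by rw [h0, map_zero]))
      have hEKreps : τ (eval (map (Polynomial.C : F →+* Polynomial F) c) y)
          ∈ reps (map (ratHom1 F) c) := by
        refine ⟨fun h0 => hE0 (hτinj (by rw [h0, map_zero])), fun i => τ (y i), ?_⟩
        exact eval_map_apply τ (map (Polynomial.C : F →+* Polynomial F) c) y
      have hCbreps : τ (Polynomial.C b) ∈ reps (map (ratHom1 F) c) := by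
        obtain ⟨hbne, xb, hxb⟩ := hlcreps
        refine ⟨hCbK0, fun i => ratHom1 F (xb i), ?_⟩
        have := eval_map_apply (ratHom1 F) c xb
        rw [this, hxb]
        rfl
      set s : K := (τ S.prod * τ (Polynomial.C b))⁻¹ with hs
      have hs0 : s ≠ 0 := by
        rw [hs]
        exact inv_ne_zero (mul_ne_zero hPK0 hCbK0)
      have hfK : τ f = (s ^ 2 * τ (eval (map (Polynomial.C : F →+* Polynomial F) c) y))
          * τ (Polynomial.C b) * τ S.prod := by
        rw [hEK, hs]
        have hA : (τ S.prod * τ (Polynomial.C b))⁻¹ ^ 2 * (τ S.prod * τ (Polynomial.C b)) ^ 2 = 1 :=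
          by rw [← mul_pow, inv_mul_cancel₀ (mul_ne_zero hPK0 hCbK0), one_pow]
        linear_combination (-τ f) * hA
      refine ⟨1 + 1 + mS, by omega, ?_⟩
      rw [hfK]
      exact repsPow_mul_mem
        (repsPow_mul_mem (mem_repsPow_one (sq_mul_mem_reps hEKreps hs0))
          (mem_repsPow_one hCbreps)) hPmem

end Aux4
section Aux5

set_option linter.unusedSectionVars false
set_option maxHeartbeats 1000000

open Polynomial

variable {F : Type u} [Field F] {ι : Type} [Fintype ι]

/-- Key induction: the hard direction for anisotropic forms. -/
lemma key_lemma {c : ι → ι → F} (han : ¬ IsIsotropic c) :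
    ∀ N : ℕ, ∀ f : Polynomial F, f.Monic → Irreducible f → f.natDegree ≤ N →
      (∃ y : ι → Polynomial F, (¬ ∀ i, f ∣ y i) ∧
        f ∣ eval (map (Polynomial.C : F →+* Polynomial F) c) y) →
      ∃ m ≤ f.natDegree,
        algebraMap (Polynomial F) (FractionRing (Polynomial F)) f
          ∈ repsPow (map (ratHom1 F) c) m := by
  classical
  intro N
  induction N using Nat.strong_induction_on with
  | _ N ihN =>
    rintro f hfm hfi hfN ⟨y, hy1, hy2⟩
    have hf0 : f ≠ 0 := hfi.ne_zero
    have hfdeg : 0 < f.natDegree := hfi.natDegree_pos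
    set y' : ι → Polynomial F := fun i => y i %ₘ f with hy'
    have hsub : ∀ i, f ∣ y i - y' i := by
      intro i
      refine ⟨y i /ₘ f, ?_⟩
      have := Polynomial.modByMonic_add_div (y i) f
      rw [hy']
      linear_combination -this
    have hy2' : f ∣ eval (map (Polynomial.C : F →+* Polynomial F) c) y' := by
      have hd := dvd_eval_sub (map (Polynomial.C : F →+* Polynomial F) c) f y y' hsub
      have := dvd_sub hy2 hd
      simpa using this
    have hy1' : ¬ ∀ i, f ∣ y' i := by
      intro hall
      refine hy1 fun i => ?_
      have := dvd_add (hsub i) (hall i)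
      simpa using this
    have hy'0 : y' ≠ 0 := by
      intro h0
      exact hy1' fun i => by rw [congrFun h0 i]; exact dvd_zero f
    have hdlt : ∀ i, (y' i).natDegree < f.natDegree := by
      intro i
      by_cases h0 : y' i = 0
      · rw [h0, natDegree_zero]; exact hfdeg
      · exact Polynomial.natDegree_lt_natDegree h0 (degree_modByMonic_lt (y i) hfm)
    obtain ⟨hE0, hdegE, hlc⟩ := lc_lemma han hy'0
    have hDlt : (Finset.univ.sup fun i => (y' i).natDegree) < f.natDegree :=
      (Finset.sup_lt_iff (by simpa using hfdeg)).mpr fun i _ => hdlt i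
    obtain ⟨h, hh⟩ := hy2'
    have hh0 : h ≠ 0 := by
      intro h0; rw [h0, mul_zero] at hh; exact hE0 hh
    have hdegsum : f.natDegree + h.natDegree
        = 2 * (Finset.univ.sup fun i => (y' i).natDegree) := by
      rw [← natDegree_mul hf0 hh0, ← hh, hdegE]
    have hhdeg2 : h.natDegree + 2 ≤ f.natDegree := by omega
    have hfh : ¬ f ∣ h := by
      intro hd
      have := Polynomial.natDegree_le_of_dvd hd hh0
      omega
    have hIH : ∀ q : Polynomial F, q.Monic → Irreducible q → q ∣ h →
        (∃ z : ι → Polynomial F, (¬ ∀ i, q ∣ z i) ∧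
          q ∣ eval (map (Polynomial.C : F →+* Polynomial F) c) z) →
        ∃ m ≤ q.natDegree,
          algebraMap (Polynomial F) (FractionRing (Polynomial F)) q
            ∈ repsPow (map (ratHom1 F) c) m := by
      intro q hqm hqi hqd hex
      have hqdeg : q.natDegree ≤ h.natDegree := Polynomial.natDegree_le_of_dvd hqd hh0
      exact ihN q.natDegree (by omega) q hqm hqi le_rfl hex
    obtain ⟨m, hm, hmem⟩ := claim2 han hfm hfi h.natDegree h y' hh0 hy'0 hh hfh le_rfl hIH
    exact ⟨m, by omega, hmem⟩

/-- Forward-direction descent: from a product representation divisible by `f`, produce a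
polynomial isotropy vector mod `f`. -/
lemma lemmaQ {c : ι → ι → F} {f : Polynomial F} (hfi : Irreducible f) :
    ∀ N : ℕ, ∀ (u : Polynomial F) (m : ℕ) (y : Fin m → ι → Polynomial F),
      u ≠ 0 → (∀ k, eval (map (Polynomial.C : F →+* Polynomial F) c) (y k) ≠ 0) →
      f * u ^ 2 = ∏ k, eval (map (Polynomial.C : F →+* Polynomial F) c) (y k) →
      u.natDegree ≤ N →
      ∃ z : ι → Polynomial F, (¬ ∀ i, f ∣ z i) ∧
        f ∣ eval (map (Polynomial.C : F →+* Polynomial F) c) z := by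
  classical
  intro N
  induction N using Nat.strong_induction_on with
  | _ N ihN =>
    intro u m y hu0 hev heq huN
    have hp : Prime f := hfi.prime
    have hdvd : f ∣ ∏ k, eval (map (Polynomial.C : F →+* Polynomial F) c) (y k) :=
      heq ▸ Dvd.intro _ rfl
    obtain ⟨k₀, -, hk₀⟩ := (Prime.dvd_finset_prod_iff hp _).mp hdvd
    by_cases hall : ∀ i, f ∣ y k₀ i
    · choose g hg using hall
      have hyk : y k₀ = f • g := funext fun i => by rw [hg i]; simp
      have hEg : eval (map (Polynomial.C : F →+* Polynomial F) c) (y k₀)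
          = f ^ 2 * eval (map (Polynomial.C : F →+* Polynomial F) c) g := by
        rw [hyk, eval_smul]
      have hEg0 : eval (map (Polynomial.C : F →+* Polynomial F) c) g ≠ 0 := by
        intro h0; apply hev k₀; rw [hEg, h0, mul_zero]
      have hsplit : ∏ k, eval (map (Polynomial.C : F →+* Polynomial F) c) (y k)
          = eval (map (Polynomial.C : F →+* Polynomial F) c) (y k₀)
            * ∏ k ∈ Finset.univ.erase k₀,
                eval (map (Polynomial.C : F →+* Polynomial F) c) (y k) :=
        (Finset.mul_prod_erase Finset.univ _ (Finset.mem_univ k₀)).symm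
      have hfu : f ∣ u := by
        have h1 : u ^ 2 = f * (eval (map (Polynomial.C : F →+* Polynomial F) c) g
            * ∏ k ∈ Finset.univ.erase k₀,
                eval (map (Polynomial.C : F →+* Polynomial F) c) (y k)) := by
          refine mul_left_cancel₀ hfi.ne_zero ?_
          rw [heq, hsplit, hEg]; ring
        exact hp.dvd_of_dvd_pow ⟨_, h1⟩
      obtain ⟨u₁, hu₁⟩ := hfu
      have hu₁0 : u₁ ≠ 0 := fun h0 => hu0 (by rw [hu₁, h0, mul_zero])
      set y₁ : Fin m → ι → Polynomial F := Function.update y k₀ g with hy₁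
      have hfun : (fun k => eval (map (Polynomial.C : F →+* Polynomial F) c) (y₁ k))
          = Function.update (fun k => eval (map (Polynomial.C : F →+* Polynomial F) c) (y k))
              k₀ (eval (map (Polynomial.C : F →+* Polynomial F) c) g) := by
        funext k
        by_cases hk : k = k₀ <;> simp [hy₁, hk, Function.update]
      have hprod₁ : ∏ k, eval (map (Polynomial.C : F →+* Polynomial F) c) (y₁ k)
          = eval (map (Polynomial.C : F →+* Polynomial F) c) g
            * ∏ k ∈ Finset.univ.erase k₀,
                eval (map (Polynomial.C : F →+* Polynomial F) c) (y k) := by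
        rw [hfun, Finset.prod_update_of_mem (Finset.mem_univ k₀)]
        rw [Finset.sdiff_singleton_eq_erase]
      have heq₁ : f * u₁ ^ 2 = ∏ k, eval (map (Polynomial.C : F →+* Polynomial F) c) (y₁ k) := by
        refine mul_left_cancel₀ (pow_ne_zero 2 hfi.ne_zero) ?_
        rw [hprod₁]
        have h2 := heq
        rw [hu₁, hsplit, hEg] at h2
        linear_combination h2
      have hev₁ : ∀ k, eval (map (Polynomial.C : F →+* Polynomial F) c) (y₁ k) ≠ 0 := by
        intro k
        by_cases hk : k = k₀
        · subst hk; simp [hy₁, Function.update, hEg0]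
        · simpa [hy₁, Function.update, hk] using hev k
      have hdeglt : u₁.natDegree < u.natDegree := by
        rw [hu₁, natDegree_mul hfi.ne_zero hu₁0]
        have := hfi.natDegree_pos
        omega
      exact ihN u₁.natDegree (by omega) u₁ m y₁ hu₁0 hev₁ heq₁ le_rfl
    · exact ⟨y k₀, hall, hk₀⟩

end Aux5
section Aux6

set_option linter.unusedSectionVars false
set_option maxHeartbeats 1000000

open Polynomial

variable {F : Type u} [Field F] {ι : Type} [Fintype ι]

lemma isotropic_of_poly {c : ι → ι → F} {f : Polynomial F} (hfi : Irreducible f)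
    {z : ι → Polynomial F} (hz1 : ¬ ∀ i, f ∣ z i)
    (hz2 : f ∣ eval (map (Polynomial.C : F →+* Polynomial F) c) z) :
    IsIsotropic (map (ffHom Polynomial.C f) c) := by
  classical
  haveI hprime : (Ideal.span {f} : Ideal (Polynomial F)).IsPrime :=
    (Ideal.span_singleton_prime hfi.ne_zero).mpr hfi.prime
  haveI : IsDomain (Polynomial F ⧸ (Ideal.span {f} : Ideal (Polynomial F))) :=
    Ideal.Quotient.isDomain _
  set π := Ideal.Quotient.mk (Ideal.span {f} : Ideal (Polynomial F)) with hπ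
  set ρ := algebraMap (Polynomial F ⧸ (Ideal.span {f} : Ideal (Polynomial F)))
    (FractionRing (Polynomial F ⧸ (Ideal.span {f} : Ideal (Polynomial F)))) with hρ
  have hρinj : Function.Injective ρ := IsFractionRing.injective _ _
  refine ⟨fun i => ρ (π (z i)), ?_, ?_⟩
  · intro h0
    refine hz1 fun i => ?_
    have h1 : ρ (π (z i)) = 0 := congrFun h0 i
    have h2 : π (z i) = 0 := hρinj (by rw [h1, map_zero])
    rw [hπ, Ideal.Quotient.eq_zero_iff_mem, Ideal.mem_span_singleton] at h2
    exact h2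
  · have e1 : eval (map (ffHom Polynomial.C f) c) (fun i => ρ (π (z i)))
        = ρ (π (eval (map (Polynomial.C : F →+* Polynomial F) c) z)) :=
      eval_map_apply (ρ.comp π) (map (Polynomial.C : F →+* Polynomial F) c) z
    rw [e1]
    have h3 : π (eval (map (Polynomial.C : F →+* Polynomial F) c) z) = 0 := by
      rw [hπ, Ideal.Quotient.eq_zero_iff_mem, Ideal.mem_span_singleton]; exact hz2
    rw [h3, map_zero]

lemma poly_of_isotropic {c : ι → ι → F} {f : Polynomial F} (hfi : Irreducible f)
    (hiso : IsIsotropic (map (ffHom Polynomial.C f) c)) :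
    ∃ z : ι → Polynomial F, (¬ ∀ i, f ∣ z i) ∧
      f ∣ eval (map (Polynomial.C : F →+* Polynomial F) c) z := by
  classical
  haveI hprime : (Ideal.span {f} : Ideal (Polynomial F)).IsPrime :=
    (Ideal.span_singleton_prime hfi.ne_zero).mpr hfi.prime
  haveI : IsDomain (Polynomial F ⧸ (Ideal.span {f} : Ideal (Polynomial F))) :=
    Ideal.Quotient.isDomain _
  haveI hmax : (Ideal.span {f} : Ideal (Polynomial F)).IsMaximal :=
    PrincipalIdealRing.isMaximal_of_irreducible hfi
  letI : Field (Polynomial F ⧸ (Ideal.span {f} : Ideal (Polynomial F))) :=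
    Ideal.Quotient.field _
  obtain ⟨x, hx0, hx⟩ := hiso
  set ρ := algebraMap (Polynomial F ⧸ (Ideal.span {f} : Ideal (Polynomial F)))
    (FractionRing (Polynomial F ⧸ (Ideal.span {f} : Ideal (Polynomial F)))) with hρ
  have hρinj : Function.Injective ρ := IsFractionRing.injective _ _
  have hsurj : ∀ a : FractionRing (Polynomial F ⧸ (Ideal.span {f} : Ideal (Polynomial F))),
      ∃ w, ρ w = a := by
    intro a
    obtain ⟨p, q, hq, hpq⟩ := IsFractionRing.div_surjective
      (A := Polynomial F ⧸ (Ideal.span {f} : Ideal (Polynomial F))) a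
    exact ⟨p / q, by rw [hρ, map_div₀]; exact hpq⟩
  choose w hw using fun i => hsurj (x i)
  choose z hz using fun i =>
    Ideal.Quotient.mk_surjective (I := (Ideal.span {f} : Ideal (Polynomial F))) (w i)
  refine ⟨z, ?_, ?_⟩
  · intro hall
    apply hx0
    funext i
    have h1 : Ideal.Quotient.mk (Ideal.span {f} : Ideal (Polynomial F)) (z i) = 0 := by
      rw [Ideal.Quotient.eq_zero_iff_mem, Ideal.mem_span_singleton]
      exact hall i
    have h2 : w i = 0 := by rw [← hz i, h1]
    show x i = 0
    rw [← hw i, h2, map_zero]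
  · have hxw : x = fun i =>
        ρ (Ideal.Quotient.mk (Ideal.span {f} : Ideal (Polynomial F)) (z i)) :=
      funext fun i => by rw [hz i, hw i]
    have e2 : eval (map (ffHom Polynomial.C f) c)
        (fun i => ρ (Ideal.Quotient.mk (Ideal.span {f} : Ideal (Polynomial F)) (z i)))
        = ρ (Ideal.Quotient.mk (Ideal.span {f} : Ideal (Polynomial F))
            (eval (map (Polynomial.C : F →+* Polynomial F) c) z)) :=
      eval_map_apply (ρ.comp (Ideal.Quotient.mk (Ideal.span {f} : Ideal (Polynomial F))))
        (map (Polynomial.C : F →+* Polynomial F) c) z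
    have e1 : ρ (Ideal.Quotient.mk (Ideal.span {f} : Ideal (Polynomial F))
        (eval (map (Polynomial.C : F →+* Polynomial F) c) z)) = 0 := by
      rw [← e2, ← hxw]
      exact hx
    have h3 : Ideal.Quotient.mk (Ideal.span {f} : Ideal (Polynomial F))
        (eval (map (Polynomial.C : F →+* Polynomial F) c) z) = 0 :=
      hρinj (by rw [e1, map_zero])
    rw [Ideal.Quotient.eq_zero_iff_mem, Ideal.mem_span_singleton] at h3
    exact h3

end Aux6

/-- Let `F` be a field of characteristic 2, `φ` a nondefective
quadratic form over `F` with `1 ∈ D_F^*(φ)`, and `f ∈ F[X]` a monic irreducible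
polynomial in one variable.  Then `f ∈ D^*_{F(X)}(φ)^m` for some `m ≤ deg f` if and
only if `φ_{F(f)}` is isotropic. -/
theorem stmt8 {F : Type u} [Field F] [CharP F 2] {ι : Type} [Fintype ι]
    (c : ι → ι → F) (hnd : IsNondefective c) (hone : (1 : F) ∈ reps c)
    (f : Polynomial F) (hmonic : f.Monic) (hirr : Irreducible f) :
    (∃ m ≤ f.natDegree,
        algebraMap (Polynomial F) (FractionRing (Polynomial F)) f
          ∈ repsPow (map (ratHom1 F) c) m) ↔
      IsIsotropic (map (ffHom Polynomial.C f) c) := by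
  classical
  constructor
  · -- forward direction
    rintro ⟨m, hm, v, hv, hprod⟩
    have hτinj : Function.Injective (algebraMap (Polynomial F) (FractionRing (Polynomial F))) :=
      IsFractionRing.injective _ _
    have hxex : ∀ k, ∃ x : ι → FractionRing (Polynomial F),
        eval (map (ratHom1 F) c) x = v k := fun k => (hv k).2
    choose x hx using hxex
    have hden : ∀ k : Fin m, ∃ d : nonZeroDivisors (Polynomial F),
        ∀ i, IsLocalization.IsInteger (Polynomial F) ((d : Polynomial F) • x k i) := fun k =>
      IsLocalization.exist_integer_multiples_of_finite (nonZeroDivisors (Polynomial F)) (x k)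
    choose d hd using hden
    have hYex : ∀ (k : Fin m) (i : ι), ∃ Y : Polynomial F,
        algebraMap (Polynomial F) (FractionRing (Polynomial F)) Y
          = (d k : Polynomial F) • x k i := by
      intro k i
      obtain ⟨Y, hY⟩ := hd k i
      exact ⟨Y, hY⟩
    choose Y hYe using hYex
    have hEMA : ∀ k : Fin m, eval (map (ratHom1 F) c)
        (fun i => algebraMap (Polynomial F) (FractionRing (Polynomial F)) (Y k i))
        = algebraMap (Polynomial F) (FractionRing (Polynomial F))
            (eval (map (Polynomial.C : F →+* Polynomial F) c) (Y k)) := fun k =>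
      eval_map_apply (algebraMap (Polynomial F) (FractionRing (Polynomial F)))
        (map (Polynomial.C : F →+* Polynomial F) c) (Y k)
    have hEk : ∀ k, algebraMap (Polynomial F) (FractionRing (Polynomial F))
        (eval (map (Polynomial.C : F →+* Polynomial F) c) (Y k))
        = algebraMap (Polynomial F) (FractionRing (Polynomial F)) (d k : Polynomial F) ^ 2
            * v k := by
      intro k
      have hfun : (fun i => algebraMap (Polynomial F) (FractionRing (Polynomial F)) (Y k i))
          = (algebraMap (Polynomial F) (FractionRing (Polynomial F)) (d k : Polynomial F))
              • x k := by
        funext i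
        rw [hYe k i, Algebra.smul_def]
        simp [Pi.smul_apply, smul_eq_mul]
      rw [← hEMA k, hfun, eval_smul, hx k]
    have hprodY : algebraMap (Polynomial F) (FractionRing (Polynomial F))
        (∏ k, eval (map (Polynomial.C : F →+* Polynomial F) c) (Y k))
        = algebraMap (Polynomial F) (FractionRing (Polynomial F))
            (f * (∏ k, (d k : Polynomial F)) ^ 2) := by
      rw [map_prod, map_mul, map_pow, map_prod]
      calc ∏ k, algebraMap (Polynomial F) (FractionRing (Polynomial F))
            (eval (map (Polynomial.C : F →+* Polynomial F) c) (Y k))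
          = ∏ k, (algebraMap (Polynomial F) (FractionRing (Polynomial F))
              (d k : Polynomial F) ^ 2 * v k) := Finset.prod_congr rfl fun k _ => hEk k
        _ = (∏ k, algebraMap (Polynomial F) (FractionRing (Polynomial F))
              (d k : Polynomial F)) ^ 2 * ∏ k, v k := by
            rw [Finset.prod_mul_distrib, Finset.prod_pow]
        _ = algebraMap (Polynomial F) (FractionRing (Polynomial F)) f
              * (∏ k, algebraMap (Polynomial F) (FractionRing (Polynomial F))
                  (d k : Polynomial F)) ^ 2 := by
            rw [← hprod]; ring
    have heqP : ∏ k, eval (map (Polynomial.C : F →+* Polynomial F) c) (Y k)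
        = f * (∏ k, (d k : Polynomial F)) ^ 2 := hτinj hprodY
    have hd0 : ∀ k, (d k : Polynomial F) ≠ 0 := fun k =>
      mem_nonZeroDivisors_iff_ne_zero.mp (d k).2
    have hu0 : (∏ k, (d k : Polynomial F)) ≠ 0 :=
      Finset.prod_ne_zero_iff.mpr fun k _ => hd0 k
    have hevk : ∀ k, eval (map (Polynomial.C : F →+* Polynomial F) c) (Y k) ≠ 0 := by
      intro k h0
      have h1 := hEk k
      rw [h0, map_zero] at h1
      have hτd : algebraMap (Polynomial F) (FractionRing (Polynomial F))
          (d k : Polynomial F) ≠ 0 := fun hh => hd0 k (hτinj (by rw [hh, map_zero]))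
      rcases mul_eq_zero.mp h1.symm with h | h
      · exact pow_ne_zero 2 hτd h
      · exact (hv k).1 h
    obtain ⟨z, hz1, hz2⟩ := lemmaQ hirr (∏ k, (d k : Polynomial F)).natDegree
      (∏ k, (d k : Polynomial F)) m Y hu0 hevk heqP.symm le_rfl
    exact isotropic_of_poly hirr hz1 hz2
  · -- backward direction
    intro hiso
    by_cases hI : IsIsotropic c
    · refine ⟨1, hirr.natDegree_pos, ?_⟩
      have hfK0 : algebraMap (Polynomial F) (FractionRing (Polynomial F)) f ≠ 0 :=
        fun h0 => hirr.ne_zero (IsFractionRing.injective (Polynomial F)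
          (FractionRing (Polynomial F)) (by rw [h0, map_zero]))
      exact mem_repsPow_one (mem_reps_of_isotropic hnd hI (ratHom1 F) hfK0)
    · obtain ⟨z, hz1, hz2⟩ := poly_of_isotropic hirr hiso
      exact key_lemma hI f.natDegree f hmonic hirr le_rfl ⟨z, hz1, hz2⟩

end QF2
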